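/- Let p, R, s ≥ 1 be natural numbers with R dividing p and 1 ≤ s ≤ p, let B_1,…,B_R be pairwise disjoint subsets of {1,…,p}, each of size p/R, whose union is {1,…,p}, and let ε > 0. Then Θ(p,s,ε) ⊆ Υ_I(p,s,ε) ∪ Υ_II(p,s,ε), where Θ(p,s,ε) := {θ ∈ ℝ^p : ‖θ‖ ≥ ε and ‖θ‖₀ ≤ s}, Υ_I(p,s,ε) := {θ ∈ ℝ^p : ‖θ‖₀ ≤ s and Σ_{k=1}^R ‖θ_{B_k} − θ̄_{B_k} 1_{B_k ∩ supp(θ)}‖² ≥ ε²/8}, and Υ_II(p,s,ε) := {θ ∈ ℝ^p : ‖θ‖₀ ≤ s and Σ_{k : |B_k ∩ supp(θ)| > p/(4R)} ‖θ̄_{B_k} 1_{B_k}‖² ≥ ε²/8}. -/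
import Mathlib


open Finset
open scoped Classical

noncomputable section

set_option maxHeartbeats 1000000 in
theorem theta_subset_upsilon_union
    (p R s : ℕ) (hp : 1 ≤ p) (hR : 1 ≤ R) (hs1 : 1 ≤ s) (hs2 : s ≤ p) (hdvd : R ∣ p)
    (B : Fin R → Finset (Fin p))
    (hdisj : ∀ k l, k ≠ l → Disjoint (B k) (B l))
    (hcard : ∀ k, (B k).card = p / R)
    (hcover : (Finset.univ : Finset (Fin R)).biUnion B = Finset.univ)
    (ε : ℝ) (hε : 0 < ε) :
    -- `bar θ k` is the group average `θ̄_{B_k} = (R/p) Σ_{i ∈ B_k} θ_i`.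
    (let bar : (Fin p → ℝ) → Fin R → ℝ := fun θ k => ((R : ℝ) / p) * ∑ i ∈ B k, θ i
    {θ : Fin p → ℝ | ε ≤ Real.sqrt (∑ i, θ i ^ 2) ∧ Set.ncard {i | θ i ≠ 0} ≤ s} ⊆
      -- Υ_I(p,s,ε)
      {θ : Fin p → ℝ | Set.ncard {i | θ i ≠ 0} ≤ s ∧
        ε ^ 2 / 8 ≤ ∑ k, ∑ i,
          ((if i ∈ B k then θ i else 0)
            - bar θ k * (if i ∈ B k ∧ θ i ≠ 0 then 1 else 0)) ^ 2} ∪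
      -- Υ_II(p,s,ε)
      {θ : Fin p → ℝ | Set.ncard {i | θ i ≠ 0} ≤ s ∧
        ε ^ 2 / 8 ≤
          ∑ k ∈ Finset.univ.filter
              (fun k => (p : ℝ) / (4 * R) < ((B k).filter (fun i => θ i ≠ 0)).card),
            ∑ i, (bar θ k * (if i ∈ B k then 1 else 0)) ^ 2}) := by
  intro bar θ hθ
  obtain ⟨hε', hsupp⟩ := hθ
  have hp' : (0:ℝ) < p := by exact_mod_cast hp
  have hR' : (0:ℝ) < R := by exact_mod_cast hR
  -- notation
  set m : Fin R → ℕ := fun k => ((B k).filter (fun i => θ i ≠ 0)).card with hm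
  set T : Fin R → ℝ := fun k => ∑ i ∈ B k, θ i ^ 2 with hT
  set r : Fin R → ℝ := fun k =>
    ∑ i ∈ B k, (θ i - bar θ k * (if θ i ≠ 0 then 1 else 0)) ^ 2 with hr
  have hTnn : ∀ k, 0 ≤ T k := fun k => Finset.sum_nonneg fun i _ => sq_nonneg _
  -- ‖θ‖² = ∑ k, T k
  have fact1 : ∑ i, θ i ^ 2 = ∑ k, T k := by
    rw [← hcover, Finset.sum_biUnion]
    intro k _ l _ hkl
    exact hdisj k l hkl
  have hε2 : ε ^ 2 ≤ ∑ k, T k := by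
    rw [← fact1]
    have h0 : 0 ≤ ∑ i, θ i ^ 2 := Finset.sum_nonneg fun i _ => sq_nonneg _
    nlinarith [Real.sq_sqrt h0, Real.sqrt_nonneg (∑ i, θ i ^ 2)]
  -- rewrite inner sums of Υ_I
  have fact2 : ∀ k, ∑ i, ((if i ∈ B k then θ i else 0)
      - bar θ k * (if i ∈ B k ∧ θ i ≠ 0 then 1 else 0)) ^ 2 = r k := by
    intro k
    have : ∀ i : Fin p, ((if i ∈ B k then θ i else 0)
        - bar θ k * (if i ∈ B k ∧ θ i ≠ 0 then 1 else 0)) ^ 2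
        = if i ∈ B k then (θ i - bar θ k * (if θ i ≠ 0 then 1 else 0)) ^ 2 else 0 := by
      intro i
      by_cases hi : i ∈ B k <;> by_cases hz : θ i ≠ 0 <;> simp [hi, hz]
    rw [Finset.sum_congr rfl fun i _ => this i, Finset.sum_ite_mem,
      Finset.univ_inter]
  -- rewrite inner sums of Υ_II
  have fact3 : ∀ k, ∑ i, (bar θ k * (if i ∈ B k then 1 else 0)) ^ 2
      = ((B k).card : ℝ) * bar θ k ^ 2 := by
    intro k
    have : ∀ i : Fin p, (bar θ k * (if i ∈ B k then 1 else 0)) ^ 2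
        = if i ∈ B k then bar θ k ^ 2 else 0 := by
      intro i; by_cases hi : i ∈ B k <;> simp [hi]
    rw [Finset.sum_congr rfl fun i _ => this i, Finset.sum_ite_mem,
      Finset.univ_inter, Finset.sum_const, nsmul_eq_mul]
  -- pointwise decomposition
  have fact4 : ∀ k, T k ≤ 2 * r k + 2 * (m k : ℝ) * bar θ k ^ 2 := by
    intro k
    have hsq : ∑ i ∈ B k, (bar θ k * (if θ i ≠ 0 then 1 else 0)) ^ 2
        = (m k : ℝ) * bar θ k ^ 2 := by
      rw [hm]
      rw [Finset.sum_congr rfl (fun i _ => by by_cases hz : θ i ≠ 0 <;>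
        simp [hz] : ∀ i ∈ B k, (bar θ k * (if θ i ≠ 0 then 1 else 0)) ^ 2
          = if θ i ≠ 0 then bar θ k ^ 2 else 0), ← Finset.sum_filter,
        Finset.sum_const, nsmul_eq_mul]
    have : T k ≤ 2 * r k + 2 * ∑ i ∈ B k, (bar θ k * (if θ i ≠ 0 then 1 else 0)) ^ 2 := by
      rw [hT, hr, Finset.mul_sum, Finset.mul_sum, ← Finset.sum_add_distrib]
      refine Finset.sum_le_sum fun i _ => ?_
      nlinarith [sq_nonneg (θ i - 2 * (bar θ k * (if θ i ≠ 0 then 1 else 0)))]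
    calc T k ≤ _ := this
      _ = 2 * r k + 2 * (m k : ℝ) * bar θ k ^ 2 := by rw [hsq]; ring
  -- bound for small blocks
  have fact5 : ∀ k, ((m k : ℝ) ≤ (p : ℝ) / (4 * R)) →
      (m k : ℝ) * bar θ k ^ 2 ≤ (1/16) * T k := by
    intro k hk
    have hmnn : (0:ℝ) ≤ (m k : ℝ) := Nat.cast_nonneg _
    have hsum : ∑ i ∈ B k, θ i = ∑ i ∈ (B k).filter (fun i => θ i ≠ 0), θ i := by
      rw [Finset.sum_filter_ne_zero]
    have hcs : (∑ i ∈ (B k).filter (fun i => θ i ≠ 0), θ i) ^ 2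
        ≤ (m k : ℝ) * ∑ i ∈ (B k).filter (fun i => θ i ≠ 0), θ i ^ 2 := by
      have := sq_sum_le_card_mul_sum_sq (s := (B k).filter (fun i => θ i ≠ 0)) (f := θ)
      exact_mod_cast this
    have hTle : ∑ i ∈ (B k).filter (fun i => θ i ≠ 0), θ i ^ 2 ≤ T k :=
      Finset.sum_le_sum_of_subset_of_nonneg (Finset.filter_subset _ _)
        (fun i _ _ => sq_nonneg _)
    have hbar : bar θ k ^ 2 ≤ ((R:ℝ)/p)^2 * ((m k : ℝ) * T k) := by
      have : bar θ k ^ 2 = ((R:ℝ)/p)^2 * (∑ i ∈ B k, θ i) ^ 2 := by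
        simp only [bar]; ring
      rw [this, hsum]
      have h1 : (∑ i ∈ (B k).filter (fun i => θ i ≠ 0), θ i) ^ 2 ≤ (m k : ℝ) * T k :=
        hcs.trans (by nlinarith)
      nlinarith [sq_nonneg ((R:ℝ)/p)]
    have hRp : (0:ℝ) ≤ (R:ℝ)/p := by positivity
    have key : ((R:ℝ)/p) * (m k : ℝ) ≤ 1/4 := by
      have h4 : (m k:ℝ) * (4*(R:ℝ)) ≤ (p:ℝ) := (le_div_iff₀ (by positivity)).mp hk
      rw [div_mul_eq_mul_div, div_le_div_iff₀ hp' (by norm_num)]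
      nlinarith
    have h16 : (((R:ℝ)/p) * (m k:ℝ))^2 ≤ 1/16 := by nlinarith [mul_nonneg hRp hmnn]
    calc (m k:ℝ) * bar θ k ^ 2 ≤ (m k:ℝ) * (((R:ℝ)/p)^2 * ((m k : ℝ) * T k)) :=
          mul_le_mul_of_nonneg_left hbar hmnn
      _ = (((R:ℝ)/p) * (m k:ℝ))^2 * T k := by ring
      _ ≤ (1/16) * T k := mul_le_mul_of_nonneg_right h16 (hTnn k)
  -- assemble, by contradiction
  by_contra hcon
  simp only [Set.mem_union, Set.mem_setOf_eq, not_or, not_and, not_le] at hcon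
  obtain ⟨h1, h2⟩ := hcon
  have hA : ∑ k, r k < ε ^ 2 / 8 := by
    have := h1 hsupp
    rwa [Finset.sum_congr rfl fun k _ => fact2 k] at this
  have hC : ∑ k ∈ Finset.univ.filter
      (fun k => (p : ℝ) / (4 * R) < (m k : ℝ)), ((B k).card : ℝ) * bar θ k ^ 2
      < ε ^ 2 / 8 := by
    have := h2 hsupp
    rwa [Finset.sum_congr rfl fun k _ => fact3 k] at this
  set L := Finset.univ.filter (fun k : Fin R => (p : ℝ) / (4 * R) < (m k : ℝ)) with hL
  have split : ∑ k, (m k : ℝ) * bar θ k ^ 2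
      = ∑ k ∈ L, (m k : ℝ) * bar θ k ^ 2 + ∑ k ∈ Lᶜ, (m k : ℝ) * bar θ k ^ 2 :=
    (Finset.sum_add_sum_compl L _).symm
  have hlarge : ∑ k ∈ L, (m k : ℝ) * bar θ k ^ 2 < ε ^ 2 / 8 := by
    refine lt_of_le_of_lt (Finset.sum_le_sum fun k _ => ?_) hC
    have hmle : m k ≤ (B k).card := Finset.card_filter_le _ _
    have : (m k : ℝ) ≤ ((B k).card : ℝ) := by exact_mod_cast hmle
    nlinarith [sq_nonneg (bar θ k)]
  have hsmall : ∑ k ∈ Lᶜ, (m k : ℝ) * bar θ k ^ 2 ≤ (1/16) * ∑ k, T k := by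
    calc ∑ k ∈ Lᶜ, (m k : ℝ) * bar θ k ^ 2 ≤ ∑ k ∈ Lᶜ, (1/16) * T k := by
          refine Finset.sum_le_sum fun k hk => fact5 k ?_
          rw [hL] at hk
          simp only [Finset.mem_compl, Finset.mem_filter, Finset.mem_univ, true_and,
            not_lt] at hk
          exact hk
      _ ≤ ∑ k, (1/16) * T k :=
          Finset.sum_le_sum_of_subset_of_nonneg (Finset.subset_univ _)
            (fun k _ _ => by nlinarith [hTnn k])
      _ = (1/16) * ∑ k, T k := by rw [Finset.mul_sum]
  have hmain : ∑ k, T k ≤ 2 * ∑ k, r k + 2 * ∑ k, (m k : ℝ) * bar θ k ^ 2 := by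
    calc ∑ k, T k ≤ ∑ k, (2 * r k + 2 * (m k : ℝ) * bar θ k ^ 2) :=
          Finset.sum_le_sum fun k _ => fact4 k
      _ = 2 * ∑ k, r k + 2 * ∑ k, (m k : ℝ) * bar θ k ^ 2 := by
          rw [Finset.sum_add_distrib, Finset.mul_sum, Finset.mul_sum]
          congr 1
          exact Finset.sum_congr rfl fun k _ => by ring
  have hε2pos : 0 < ε ^ 2 := pow_pos hε 2
  linarith [hε2, hmain, split, hlarge, hsmall, hA]

end
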